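/- In a modal FM model M = (X, ≤₁, ≤₂, R, V) with V valuing propositional variables in RO₁₂(X), the truth set of every formula of the basic modal language (built from propositional variables, ⊥, ⊤, ∧, ∨, →, □ with the FM satisfaction clauses) is a refined regular open set: ⟦φ⟧ ∈ RO₁₂(X). -/

import Mathlib

/-- `I₁C₂` for the Alexandroff upset topologies of an FM frame. -/
def fmIC {X : Type*} (le1 le2 : X → X → Prop) (A : Set X) : Set X :=
  {x | ∀ y, le1 x y → ∃ z, le2 y z ∧ z ∈ A}

/-- The box operation on sets. -/
def fmBox {X : Type*} (R : X → X → Prop) (Y : Set X) : Set X :=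
  {w | ∀ v, R w v → v ∈ Y}

/-- Formulas of the basic intuitionistic modal language. -/
inductive FMForm where
  | var : ℕ → FMForm
  | bot : FMForm
  | top : FMForm
  | and : FMForm → FMForm → FMForm
  | or : FMForm → FMForm → FMForm
  | imp : FMForm → FMForm → FMForm
  | box : FMForm → FMForm

/-- Satisfaction in a modal FM model. -/
def fmSat {X : Type*} (le1 le2 R : X → X → Prop) (V : ℕ → Set X) :
    FMForm → X → Prop
  | .var n, w => w ∈ V n
  | .bot, _ => False
  | .top, _ => True
  | .and φ ψ, w => fmSat le1 le2 R V φ w ∧ fmSat le1 le2 R V ψ w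
  | .or φ ψ, w => ∀ v, le1 w v → ∃ u, le2 v u ∧
      (fmSat le1 le2 R V φ u ∨ fmSat le1 le2 R V ψ u)
  | .imp φ ψ, w => ∀ v, le1 w v → fmSat le1 le2 R V φ v → fmSat le1 le2 R V ψ v
  | .box φ, w => ∀ v, R w v → fmSat le1 le2 R V φ v

/-- In a modal FM model, the truth set of every formula is refined regular open. -/
theorem fm_truthSet_refinedRegularOpen {X : Type*} (le1 le2 R : X → X → Prop)
    [IsPartialOrder X le1] [IsPartialOrder X le2]
    (hsub : ∀ x y, le2 x y → le1 x y)
    (hbox : ∀ Y : Set X, Y = fmIC le1 le2 Y → fmBox R Y = fmIC le1 le2 (fmBox R Y))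
    (V : ℕ → Set X) (hV : ∀ n, V n = fmIC le1 le2 (V n)) :
    ∀ φ : FMForm,
      {w : X | fmSat le1 le2 R V φ w} =
        fmIC le1 le2 {w : X | fmSat le1 le2 R V φ w} := by

  intro φ
  have r1 : ∀ x : X, le1 x x := fun x => Std.Refl.refl x
  have r2 : ∀ x : X, le2 x x := fun x => Std.Refl.refl x
  have t1 : ∀ x y z : X, le1 x y → le1 y z → le1 x z := fun _ _ _ => IsTrans.trans _ _ _
  have t2 : ∀ x y z : X, le2 x y → le2 y z → le2 x z := fun _ _ _ => IsTrans.trans _ _ _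
  -- fmIC of any set is a le1-upset
  have hup : ∀ (A : Set X) (x y : X), x ∈ fmIC le1 le2 A → le1 x y → y ∈ fmIC le1 le2 A := by
    intro A x y hx hxy y' hyy'
    exact hx y' (t1 _ _ _ hxy hyy')
  -- le1-upsets are contained in their fmIC
  have hsubIC : ∀ (A : Set X), (∀ x y, x ∈ A → le1 x y → y ∈ A) → A ⊆ fmIC le1 le2 A := by
    intro A hA x hx y hxy
    exact ⟨y, r2 y, hA _ _ hx hxy⟩
  -- idempotence
  have hidem : ∀ A : Set X, fmIC le1 le2 (fmIC le1 le2 A) = fmIC le1 le2 A := by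
    intro A
    apply Set.Subset.antisymm
    · intro x hx y hxy
      obtain ⟨z, hyz, hz⟩ := hx y hxy
      obtain ⟨z', hzz', hz'⟩ := hz z (r1 z)
      exact ⟨z', t2 _ _ _ hyz hzz', hz'⟩
    · exact hsubIC _ (hup A)
  induction φ with
  | var n => exact hV n
  | bot =>
    apply Set.Subset.antisymm
    · intro x hx; exact absurd hx (by simp [fmSat])
    · intro x hx
      obtain ⟨z, _, hz⟩ := hx x (r1 x)
      exact absurd hz (by simp [fmSat, Set.mem_setOf_eq] at hz ⊢)
  | top =>
    apply Set.Subset.antisymm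
    · intro x _ y _; exact ⟨y, r2 y, trivial⟩
    · intro x _; trivial
  | and φ ψ ihφ ihψ =>
    have hupφ : ∀ x y, fmSat le1 le2 R V φ x → le1 x y → fmSat le1 le2 R V φ y := by
      intro x y hx hxy
      exact (Set.ext_iff.mp ihφ y).mpr (hup _ x y ((Set.ext_iff.mp ihφ x).mp hx) hxy)
    have hupψ : ∀ x y, fmSat le1 le2 R V ψ x → le1 x y → fmSat le1 le2 R V ψ y := by
      intro x y hx hxy
      exact (Set.ext_iff.mp ihψ y).mpr (hup _ x y ((Set.ext_iff.mp ihψ x).mp hx) hxy)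
    apply Set.Subset.antisymm
    · intro x hx y hxy
      exact ⟨y, r2 y, hupφ _ _ hx.1 hxy, hupψ _ _ hx.2 hxy⟩
    · intro x hx
      constructor
      · have : x ∈ fmIC le1 le2 {w | fmSat le1 le2 R V φ w} := by
          intro y hxy
          obtain ⟨z, hyz, hz⟩ := hx y hxy
          exact ⟨z, hyz, hz.1⟩
        exact (Set.ext_iff.mp ihφ x).mpr this
      · have : x ∈ fmIC le1 le2 {w | fmSat le1 le2 R V ψ w} := by
          intro y hxy
          obtain ⟨z, hyz, hz⟩ := hx y hxy
          exact ⟨z, hyz, hz.2⟩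
        exact (Set.ext_iff.mp ihψ x).mpr this
  | or φ ψ ihφ ihψ =>
    have : {w | fmSat le1 le2 R V (.or φ ψ) w} =
        fmIC le1 le2 ({w | fmSat le1 le2 R V φ w} ∪ {w | fmSat le1 le2 R V ψ w}) := by
      ext x; rfl
    rw [this, hidem]
  | imp φ ψ ihφ ihψ =>
    have hupφ : ∀ x y, fmSat le1 le2 R V φ x → le1 x y → fmSat le1 le2 R V φ y := by
      intro x y hx hxy
      exact (Set.ext_iff.mp ihφ y).mpr (hup _ x y ((Set.ext_iff.mp ihφ x).mp hx) hxy)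
    apply Set.Subset.antisymm
    · apply hsubIC
      intro x y hx hxy v hyv hv
      exact hx v (t1 _ _ _ hxy hyv) hv
    · intro x hx v hxv hv
      have hvIC : v ∈ fmIC le1 le2 {w | fmSat le1 le2 R V ψ w} := by
        intro y hvy
        obtain ⟨z, hyz, hz⟩ := hx y (t1 _ _ _ hxv hvy)
        have hzφ : fmSat le1 le2 R V φ z := hupφ v z hv (t1 _ _ _ hvy (hsub _ _ hyz))
        exact ⟨z, hyz, hz z (r1 z) hzφ⟩
      exact (Set.ext_iff.mp ihψ v).mpr hvIC
  | box φ ihφ =>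
    exact hbox _ ihφ
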